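/- Let g be a primitive root modulo prime p, and let χ be a Dirichlet character modulo p of order d ∣ p-1. For n with index v = ind_g(n), the sum over all characters of order d modulo p satisfies Σ_{χ ∈ Γ_d} χ(n) = μ(d/m) · φ(d)/φ(d/m), where m = gcd(d, v). -/

import Mathlib

open Finset

section AuxA

open Polynomial

-- Lemma 1: sum of v-th powers over all n-th roots of unity
lemma sum_nthRoots_pow {n : ℕ} (hn : 0 < n) (v : ℕ) :
    ∑ z ∈ nthRootsFinset n (1 : ℂ), z ^ v = if n ∣ v then (n : ℂ) else 0 := by
  obtain ⟨ζ, hζ⟩ : ∃ ζ : ℂ, IsPrimitiveRoot ζ n := ⟨_, Complex.isPrimitiveRoot_exp n hn.ne'⟩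
  have himg : (Finset.range n).image (ζ ^ ·) = nthRootsFinset n (1 : ℂ) := by
    apply Finset.eq_of_subset_of_card_le
    · intro x hx
      simp only [Finset.mem_image, Finset.mem_range] at hx
      obtain ⟨j, _, rfl⟩ := hx
      exact (mem_nthRootsFinset hn (1 : ℂ)).2 (by rw [← pow_mul, mul_comm, pow_mul, hζ.pow_eq_one, one_pow])
    · rw [hζ.card_nthRootsFinset, Finset.card_image_of_injOn
        (fun i hi j hj h => hζ.pow_inj (Finset.mem_range.1 hi) (Finset.mem_range.1 hj) h),
        Finset.card_range]
  rw [← himg, Finset.sum_image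
    (fun i hi j hj h => hζ.pow_inj (Finset.mem_range.1 hi) (Finset.mem_range.1 hj) h)]
  have : ∀ j, (ζ ^ j) ^ v = (ζ ^ v) ^ j := fun j => by rw [← pow_mul, mul_comm, pow_mul]
  simp_rw [this]
  by_cases hdvd : n ∣ v
  · rw [if_pos hdvd]
    have : ζ ^ v = 1 := (hζ.pow_eq_one_iff_dvd v).2 hdvd
    simp [this]
  · rw [if_neg hdvd]
    have hne : ζ ^ v ≠ 1 := fun h => hdvd ((hζ.pow_eq_one_iff_dvd v).1 h)
    rw [geom_sum_eq hne, ← pow_mul, mul_comm, pow_mul, hζ.pow_eq_one, one_pow, sub_self, zero_div]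


-- Lemma 2: Ramanujan sum as Möbius-inverted divisor sum
lemma sum_primitiveRoots_pow {d : ℕ} (hd : 0 < d) (v : ℕ) :
    ∑ z ∈ primitiveRoots d ℂ, z ^ v =
      ∑ x ∈ d.divisorsAntidiagonal,
        (ArithmeticFunction.moebius x.1 : ℤ) • (if x.2 ∣ v then (x.2 : ℂ) else 0) := by
  have key := (ArithmeticFunction.sum_eq_iff_sum_smul_moebius_eq
    (R := ℂ) (f := fun i => ∑ z ∈ primitiveRoots i ℂ, z ^ v)
    (g := fun n => if n ∣ v then (n : ℂ) else 0)).1 ?_ d hd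
  · exact key.symm
  · intro n hn
    have hζ := Complex.isPrimitiveRoot_exp n hn.ne'
    rw [← sum_nthRoots_pow hn v, IsPrimitiveRoot.nthRoots_one_eq_biUnion_primitiveRoots,
      Finset.sum_biUnion]
    intro i _ j _ hij
    exact Finset.disjoint_coe.1 (by simpa using IsPrimitiveRoot.disjoint hij)

end AuxA

section AuxB

open ArithmeticFunction
open scoped ArithmeticFunction.Moebius

lemma holder (v : ℕ) {d : ℕ} (hd : 0 < d) :
    ∑ x ∈ d.divisorsAntidiagonal, (μ x.1 : ℤ) • (if x.2 ∣ v then (x.2 : ℂ) else 0)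
      = (μ (d / Nat.gcd d v) : ℂ) * (Nat.totient d : ℂ) / (Nat.totient (d / Nat.gcd d v) : ℂ) := by
  -- the "if divides" arithmetic function
  set h : ArithmeticFunction ℂ := ⟨fun e => if e ∣ v then (e : ℂ) else 0, by simp⟩ with hh
  have hmult : h.IsMultiplicative := by
    constructor
    · simp [hh]
    · intro a b cop
      simp only [hh, coe_mk]
      by_cases ha : a ∣ v
      · by_cases hb : b ∣ v
        · rw [if_pos (cop.mul_dvd_of_dvd_of_dvd ha hb), if_pos ha, if_pos hb]
          push_cast; ring
        · rw [if_neg fun hab => hb ((dvd_mul_left b a).trans hab), if_neg hb, mul_zero]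
      · rw [if_neg fun hab => ha ((dvd_mul_right a b).trans hab), if_neg ha, zero_mul]
  set G : ArithmeticFunction ℂ :=
    ⟨fun n => (μ (n / Nat.gcd n v) : ℂ) * (Nat.totient n : ℂ) / (Nat.totient (n / Nat.gcd n v) : ℂ),
      by simp⟩ with hG
  have hGmult : G.IsMultiplicative := by
    constructor
    · simp [hG]
    · intro a b cop
      rcases Nat.eq_zero_or_pos a with rfl | ha
      · have hb1 : b = 1 := by simpa [Nat.coprime_zero_left] using cop
        simp [hG, hb1]
      rcases Nat.eq_zero_or_pos b with rfl | hb
      · have ha1 : a = 1 := by simpa [Nat.coprime_zero_right] using cop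
        simp [hG, ha1]
      have hga : Nat.gcd a v ∣ a := Nat.gcd_dvd_left a v
      have hgb : Nat.gcd b v ∣ b := Nat.gcd_dvd_left b v
      have hkey : Nat.gcd (a * b) v = Nat.gcd a v * Nat.gcd b v := by
        rw [Nat.gcd_comm, Nat.Coprime.gcd_mul v cop, Nat.gcd_comm v a, Nat.gcd_comm v b]
      have hdiv : a * b / (Nat.gcd a v * Nat.gcd b v) = (a / Nat.gcd a v) * (b / Nat.gcd b v) :=
        (Nat.div_mul_div_comm hga hgb).symm
      have cop' : Nat.Coprime (a / Nat.gcd a v) (b / Nat.gcd b v) :=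
        Nat.Coprime.coprime_dvd_left (Nat.div_dvd_of_dvd hga)
          (Nat.Coprime.coprime_dvd_right (Nat.div_dvd_of_dvd hgb) cop)
      have hμ : μ ((a / Nat.gcd a v) * (b / Nat.gcd b v))
          = μ (a / Nat.gcd a v) * μ (b / Nat.gcd b v) :=
        isMultiplicative_moebius.2 cop'
      have hφ : Nat.totient (a * b) = Nat.totient a * Nat.totient b := Nat.totient_mul cop
      have hφ' : Nat.totient ((a / Nat.gcd a v) * (b / Nat.gcd b v))
          = Nat.totient (a / Nat.gcd a v) * Nat.totient (b / Nat.gcd b v) :=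
        Nat.totient_mul cop'
      have hta : (Nat.totient (a / Nat.gcd a v) : ℂ) ≠ 0 := by
        exact_mod_cast Nat.cast_ne_zero.mpr
          (Nat.totient_pos.mpr (Nat.div_pos (Nat.le_of_dvd ha hga)
            (Nat.gcd_pos_of_pos_left v ha))).ne'
      have htb : (Nat.totient (b / Nat.gcd b v) : ℂ) ≠ 0 := by
        exact_mod_cast Nat.cast_ne_zero.mpr
          (Nat.totient_pos.mpr (Nat.div_pos (Nat.le_of_dvd hb hgb)
            (Nat.gcd_pos_of_pos_left v hb))).ne'
      simp only [hG, coe_mk, hkey, hdiv, hμ, hφ, hφ']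
      push_cast
      field_simp
  have hFmult : ((μ : ArithmeticFunction ℂ) * h).IsMultiplicative :=
    (isMultiplicative_moebius.intCast).mul hmult
  have heq : ((μ : ArithmeticFunction ℂ) * h) = G := by
    rw [IsMultiplicative.eq_iff_eq_on_prime_powers _ hFmult _ hGmult]
    intro q k hq
    rcases Nat.eq_zero_or_pos k with rfl | hk
    · simpa using (hFmult.1.trans hGmult.1.symm)
    obtain ⟨k, rfl⟩ : ∃ k', k = k' + 1 := ⟨k - 1, (Nat.succ_pred_eq_of_pos hk).symm⟩
    obtain ⟨b, hble, hb⟩ := (Nat.dvd_prime_pow hq).1 (Nat.gcd_dvd_left (q ^ (k + 1)) v)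
    have hdvd_iff : ∀ j, j ≤ k + 1 → (q ^ j ∣ v ↔ j ≤ b) := by
      intro j hj
      constructor
      · intro hjv
        exact (Nat.pow_dvd_pow_iff_le_right hq.one_lt).1
          (hb ▸ Nat.dvd_gcd (pow_dvd_pow q hj) hjv)
      · intro hjb
        calc q ^ j ∣ q ^ b := pow_dvd_pow q hjb
          _ ∣ v := hb ▸ Nat.gcd_dvd_right _ _
    have hq1 : 1 < q := hq.one_lt
    have hqpos : 0 < q := hq.pos
    rw [mul_apply,
      Nat.sum_divisorsAntidiagonal' (f := fun a c => ((μ : ArithmeticFunction ℂ) a) * h c),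
      Nat.divisors_prime_pow hq, Finset.sum_map]
    simp only [Function.Embedding.coeFn_mk]
    have hterm : ∀ j ∈ Finset.range (k + 1 + 1), j ∉ ({k, k + 1} : Finset ℕ) →
        ((μ : ArithmeticFunction ℂ) (q ^ (k + 1) / q ^ j)) * h (q ^ j) = 0 := by
      intro j hj hj2
      have hjk : j ≤ k + 1 := Nat.lt_succ_iff.1 (Finset.mem_range.1 hj)
      simp only [Finset.mem_insert, Finset.mem_singleton] at hj2
      rw [Nat.pow_div hjk hqpos, intCoe_apply, moebius_apply_prime_pow hq (by omega),
        if_neg (by omega)]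
      simp
    rw [← Finset.sum_subset (s₁ := ({k, k + 1} : Finset ℕ))
      (by intro x hx; simp at hx ⊢; omega) hterm,
      Finset.sum_insert (by simp), Finset.sum_singleton,
      Nat.pow_div (by omega) hqpos, Nat.pow_div le_rfl hqpos]
    have e1 : k + 1 - k = 1 := by omega
    have e2 : k + 1 - (k + 1) = 0 := by omega
    rw [e1, e2, pow_one, pow_zero]
    simp only [hh, hG, coe_mk, intCoe_apply, moebius_apply_prime hq, moebius_apply_one,
      hdvd_iff k (by omega), hdvd_iff (k + 1) le_rfl]
    rw [hb, Nat.pow_div hble hqpos]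
    have hφ : Nat.totient (q ^ (k + 1)) = q ^ k * (q - 1) := by
      rw [Nat.totient_prime_pow hq (by omega)]
      norm_num
    have hcast : ((q - 1 : ℕ) : ℂ) = (q : ℂ) - 1 := by
      push_cast [Nat.cast_sub hq.one_le]; ring
    have hqne : (q : ℂ) - 1 ≠ 0 := sub_ne_zero.2 (by exact_mod_cast hq1.ne')
    rcases Nat.lt_or_ge b k with hbk | hbk
    · rw [if_neg (by omega), if_neg (by omega),
        moebius_apply_prime_pow hq (by omega), if_neg (by omega)]
      simp
    · have hbk2 : b = k ∨ b = k + 1 := by omega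
      rcases hbk2 with rfl | rfl
      · rw [if_pos le_rfl, if_neg (by omega), e1, pow_one, moebius_apply_prime hq,
          Nat.totient_prime hq, hφ]
        push_cast [hcast, Nat.cast_sub hq.one_le]
        field_simp
        ring
      · rw [if_pos (by omega), if_pos le_rfl, e2, pow_zero, moebius_apply_one, hφ]
        push_cast [hcast, Nat.cast_sub hq.one_le]
        simp
        ring
  have hd' := congrArg (fun f : ArithmeticFunction ℂ => f d) heq
  simp only [mul_apply, intCoe_apply, hG, hh, coe_mk] at hd'
  rw [← hd']
  refine Finset.sum_congr rfl fun x hx => ?_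
  rw [zsmul_eq_mul]
  simp only [intCoe_apply, coe_mk, smul_eq_mul]

end AuxB

section AuxC

/-- Variant of `MulChar.equiv_rootsOfUnity` with a specified generator. -/
noncomputable def charEquivGen {M : Type*} [CommMonoid M] [Fintype M] [DecidableEq M]
    {R : Type*} [CommMonoidWithZero R] {u : Mˣ} (hgen : ∀ x, x ∈ Subgroup.zpowers u) :
    MulChar M R ≃* rootsOfUnity (Fintype.card Mˣ) R where
  toFun χ :=
    ⟨χ.toUnitHom u, by
      simp only [MulChar.toUnitHom_eq, mem_rootsOfUnity, ← map_pow, pow_card_eq_one,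
        map_one]⟩
  invFun ζ := MulChar.ofRootOfUnity ζ.prop hgen
  left_inv χ := by
    simp only [MulChar.toUnitHom_eq, MulChar.eq_iff hgen, MulChar.ofRootOfUnity_spec,
      MulChar.coe_equivToUnitHom]
  right_inv ζ := by
    ext
    simp only [MulChar.toUnitHom_eq, MulChar.coe_equivToUnitHom, MulChar.ofRootOfUnity_spec]
  map_mul' x y := by
    simp only [MulChar.toUnitHom_eq, MulChar.equivToUnitHom_mul_apply, MulMemClass.mk_mul_mk]

lemma charEquivGen_coe {M : Type*} [CommMonoid M] [Fintype M] [DecidableEq M]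
    {R : Type*} [CommMonoidWithZero R] {u : Mˣ} (hgen : ∀ x, x ∈ Subgroup.zpowers u)
    (χ : MulChar M R) : ((charEquivGen hgen χ : Rˣ) : R) = χ ↑u := by
  simp only [charEquivGen, MulEquiv.coe_mk, Equiv.coe_fn_mk, MulChar.toUnitHom_eq,
    MulChar.coe_equivToUnitHom]

-- character sum reduces to sum over primitive roots
lemma char_sum_eq (p : ℕ) [Fact p.Prime] (g : ZMod p) (hg : orderOf g = p - 1)
    (d : ℕ) (hd : d ∣ p - 1) (hd0 : 0 < d) (v : ℕ) :
    (∑ χ ∈ univ.filter (fun χ : DirichletCharacter ℂ p => orderOf χ = d), χ (g ^ v))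
      = ∑ x ∈ primitiveRoots d ℂ, x ^ v := by
  have hp1 : 0 < p - 1 := Nat.sub_pos_of_lt (Fact.out : p.Prime).one_lt
  have hg1 : g ^ (p - 1) = 1 := hg ▸ pow_orderOf_eq_one g
  have hgne : g ≠ 0 := by
    intro h
    rw [h, zero_pow hp1.ne'] at hg1
    exact zero_ne_one hg1
  have hu : IsUnit g := isUnit_iff_ne_zero.2 hgne
  set u := hu.unit with hu_def
  have hug : (u : ZMod p) = g := hu.unit_spec
  have horder_u : orderOf u = p - 1 := by rw [← orderOf_units, hug, hg]
  have hcard : Fintype.card (ZMod p)ˣ = p - 1 := ZMod.card_units p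
  have hgen : ∀ x : (ZMod p)ˣ, x ∈ Subgroup.zpowers u := by
    have : Subgroup.zpowers u = ⊤ := by
      apply Subgroup.eq_top_of_card_eq
      rw [Nat.card_zpowers, horder_u, Nat.card_eq_fintype_card, hcard]
    intro x; rw [this]; trivial
  set e := charEquivGen (R := ℂ) hgen with he
  have horder : ∀ χ : DirichletCharacter ℂ p, orderOf (χ g) = orderOf χ := by
    intro χ
    have h2 := orderOf_injective ((rootsOfUnity (Fintype.card (ZMod p)ˣ) ℂ).subtype)
      (Subgroup.subtype_injective _) (e χ)
    simp only [Subgroup.coe_subtype] at h2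
    rw [← hug, ← charEquivGen_coe hgen χ, ← he, orderOf_units, h2, e.orderOf_eq]
  refine Finset.sum_bij (fun χ _ => χ g) ?_ ?_ ?_ ?_
  · intro χ hχ
    rw [Finset.mem_filter] at hχ
    rw [mem_primitiveRoots hd0]
    have := horder χ
    rw [hχ.2] at this
    exact this ▸ IsPrimitiveRoot.orderOf (χ g)
  · intro χ₁ h₁ χ₂ h₂ hval
    exact (MulChar.eq_iff hgen χ₁ χ₂).2 (by rwa [hug])
  · intro x hx
    have hx' : IsPrimitiveRoot x d := isPrimitiveRoot_of_mem_primitiveRoots hx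
    have hxu : IsUnit x := hx'.isUnit hd0.ne'
    have hxN : hxu.unit ^ Fintype.card (ZMod p)ˣ = 1 := by
      ext
      push_cast
      rw [hcard]
      exact (hx'.pow_eq_one_iff_dvd _).2 hd
    set z : rootsOfUnity (Fintype.card (ZMod p)ˣ) ℂ :=
      ⟨hxu.unit, (mem_rootsOfUnity _ _).2 hxN⟩ with hz
    refine ⟨e.symm z, Finset.mem_filter.2 ⟨Finset.mem_univ _, ?_⟩, ?_⟩
    · rw [e.symm.orderOf_eq z]
      have h2 := orderOf_injective ((rootsOfUnity (Fintype.card (ZMod p)ˣ) ℂ).subtype)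
        (Subgroup.subtype_injective _) z
      simp only [Subgroup.coe_subtype] at h2
      rw [← h2]
      have h3 : ((z : ℂˣ) : ℂ) = x := hxu.unit_spec
      rw [← orderOf_units, h3]
      exact hx'.eq_orderOf.symm
    · show (e.symm z) g = x
      rw [← hug, ← charEquivGen_coe hgen (e.symm z), ← he, e.apply_symm_apply]
      exact hxu.unit_spec
  · intro χ hχ
    exact map_pow χ g v

end AuxC

theorem stmt_7 (p : ℕ) [Fact p.Prime] (g : ZMod p) (hg : orderOf g = p - 1)
    (d : ℕ) (hd : d ∣ p - 1) (v : ℕ) (m : ℕ) (hm : m = Nat.gcd d v) :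
    (∑ χ ∈ univ.filter (fun χ : DirichletCharacter ℂ p => orderOf χ = d), χ (g ^ v))
      = (ArithmeticFunction.moebius (d / m) : ℂ) *
          (Nat.totient d : ℂ) / (Nat.totient (d / m) : ℂ) := by
  have hd0 : 0 < d := by
    have hp1 : 0 < p - 1 := Nat.sub_pos_of_lt (Fact.out : p.Prime).one_lt
    rcases Nat.eq_zero_or_pos d with rfl | h
    · rw [zero_dvd_iff] at hd; omega
    · exact h
  subst hm
  rw [char_sum_eq p g hg d hd hd0 v, sum_primitiveRoots_pow hd0 v, holder v hd0]
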